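/- Let f be a continuous 2π-periodic real-valued function with modulus of continuity ω and let A = (a_{n,k}) be a lower triangular infinite matrix of real numbers satisfying: (i) a_{n,k} ≥ 0 and Σ_{k=0}^{n} a_{n,k} = 1 for every n; (ii) a_{n,k} ≥ a_{n,k+1} for k = 0,1,...,n−1 and all n. Then for n ≥ 1, ‖T_{n,A}(f) − f‖_∞ = O( ω(π/n) + Σ_{k=1}^{n} k^{-1} ω(π/k) Σ_{r=0}^{k+1} a_{n,r} ), with the implied constant independent of n. -/

import Mathlib

open Real MeasureTheory

/-- The `k`-th partial sum of the (trigonometric) Fourier series of `f` at `x`. -/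
noncomputable def fourierPartialSum (f : ℝ → ℝ) (k : ℕ) (x : ℝ) : ℝ :=
  (1 / (2 * Real.pi)) * (∫ t in (-Real.pi)..Real.pi, f t) +
    ∑ j ∈ Finset.Icc 1 k,
      ((1 / Real.pi) * (∫ t in (-Real.pi)..Real.pi, f t * Real.cos (j * t)) * Real.cos (j * x) +
        (1 / Real.pi) * (∫ t in (-Real.pi)..Real.pi, f t * Real.sin (j * t)) * Real.sin (j * x))

/-- The `A`-transform `T_{n,A}(f;x) = ∑_{k=0}^n a_{n,k} S_k(f;x)`. -/
noncomputable def matrixTransform (a : ℕ → ℕ → ℝ) (f : ℝ → ℝ) (n : ℕ) (x : ℝ) : ℝ :=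
  ∑ k ∈ Finset.range (n + 1), a n k * fourierPartialSum f k x

/-- The modulus of continuity `ω(δ,f)`. -/
noncomputable def modulusOfContinuity (f : ℝ → ℝ) (δ : ℝ) : ℝ :=
  sSup {y : ℝ | ∃ x t : ℝ, |t| ≤ δ ∧ y = |f (x + t) - f x|}


section ChandraAux
open Finset

/-- Dirichlet kernel. -/
noncomputable def Dker (k : ℕ) (t : ℝ) : ℝ := 1/2 + ∑ j ∈ Finset.Icc 1 k, Real.cos (j * t)

lemma Dker_identity (k : ℕ) (t : ℝ) :
    2 * Dker k t * Real.sin (t/2) = Real.sin (((k : ℝ) + 1/2) * t) := by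
  induction k with
  | zero => simp [Dker]; ring_nf
  | succ k ih =>
      have hsum : Dker (k+1) t = Dker k t + Real.cos ((k+1 : ℕ) * t) := by
        simp [Dker, Finset.sum_Icc_succ_top (Nat.one_le_iff_ne_zero.mpr (Nat.succ_ne_zero k))]
        ring
      have key : 2 * Real.cos ((k+1 : ℕ) * t) * Real.sin (t/2)
          = Real.sin (((k : ℝ) + 1 + 1/2) * t) - Real.sin (((k : ℝ) + 1/2) * t) := by
        rw [Real.sin_sub_sin]
        push_cast
        ring_nf
      rw [hsum]
      push_cast
      push_cast at ih key
      nlinarith [ih, key]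

lemma Dker_abs_le (k : ℕ) (t : ℝ) : |Dker k t| ≤ (k : ℝ) + 1/2 := by
  have h1 : |∑ j ∈ Finset.Icc 1 k, Real.cos (j * t)| ≤ (k : ℝ) := by
    calc |∑ j ∈ Finset.Icc 1 k, Real.cos (j * t)|
        ≤ ∑ j ∈ Finset.Icc 1 k, |Real.cos (j * t)| := Finset.abs_sum_le_sum_abs _ _
      _ ≤ ∑ j ∈ Finset.Icc 1 k, 1 := Finset.sum_le_sum fun j _ => Real.abs_cos_le_one _
      _ = (k : ℝ) := by simp
  calc |Dker k t| ≤ |1/2| + |∑ j ∈ Finset.Icc 1 k, Real.cos (j * t)| := abs_add_le _ _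
    _ ≤ 1/2 + (k : ℝ) := by
        have : |(1/2 : ℝ)| = 1/2 := by norm_num
        linarith
    _ = (k : ℝ) + 1/2 := by ring

/-- partial sums of sin((k+1/2)t). -/
noncomputable def Ssin (m : ℕ) (t : ℝ) : ℝ :=
  ∑ k ∈ Finset.range (m+1), Real.sin (((k : ℝ) + 1/2) * t)

lemma cos_eq_one_sub (t : ℝ) : Real.cos t = 1 - 2 * Real.sin (t/2)^2 := by
  have h1 := Real.cos_sq (t/2)
  have h2 := Real.sin_sq_add_cos_sq (t/2)
  have : 2 * (t/2) = t := by ring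
  rw [this] at h1
  nlinarith

lemma Ssin_identity (m : ℕ) (t : ℝ) :
    2 * Ssin m t * Real.sin (t/2) = 1 - Real.cos (((m : ℝ) + 1) * t) := by
  induction m with
  | zero =>
      simp only [Ssin]
      norm_num
      rw [cos_eq_one_sub t]
      have : (1/2 : ℝ) * t = t / 2 := by ring
      rw [this]; ring
  | succ m ih =>
      have hsum : Ssin (m+1) t = Ssin m t + Real.sin (((m : ℝ) + 1 + 1/2) * t) := by
        simp only [Ssin, Finset.sum_range_succ]
        norm_num
      have key : 2 * Real.sin (((m : ℝ) + 1 + 1/2) * t) * Real.sin (t/2)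
          = Real.cos (((m : ℝ) + 1) * t) - Real.cos (((m : ℝ) + 2) * t) := by
        rw [Real.cos_sub_cos]
        have e1 : (((m:ℝ) + 1) * t + ((m:ℝ) + 2) * t)/2 = ((m:ℝ) + 1 + 1/2) * t := by ring
        have e2 : (((m:ℝ) + 1) * t - ((m:ℝ) + 2) * t)/2 = -(t/2) := by ring
        rw [e1, e2, Real.sin_neg]
        ring
      rw [hsum]
      push_cast
      rw [show ((m:ℝ) + 1 + 1) * t = ((m:ℝ) + 2) * t by ring]
      nlinarith [ih, key]

lemma Ssin_bounds {t : ℝ} (ht0 : 0 < t) (htpi : t ≤ π) (m : ℕ) :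
    0 ≤ Ssin m t ∧ Ssin m t ≤ 1 / Real.sin (t/2) := by
  have hs : 0 < Real.sin (t/2) := by
    apply Real.sin_pos_of_pos_of_lt_pi (by linarith)
    linarith [Real.pi_gt_three]
  have hid := Ssin_identity m t
  have hcos1 : Real.cos (((m : ℝ) + 1) * t) ≤ 1 := Real.cos_le_one _
  have hcos2 : -1 ≤ Real.cos (((m : ℝ) + 1) * t) := Real.neg_one_le_cos _
  constructor
  · nlinarith
  · rw [le_div_iff₀ hs]; nlinarith

/-- Abel summation identity. -/
lemma abel_identity (b c : ℕ → ℝ) (p : ℕ) :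
    ∀ n, p ≤ n → ∑ k ∈ Finset.Icc p n, b k * c k =
      (∑ j ∈ Finset.Ico p n, (b j - b (j+1)) * (∑ k ∈ Finset.Icc p j, c k))
        + b n * (∑ k ∈ Finset.Icc p n, c k) := by
  intro n hn
  induction n with
  | zero =>
      interval_cases p
      simp
  | succ n ih =>
      rcases Nat.lt_or_ge p (n+1) with h | h
      · have hpn : p ≤ n := Nat.lt_succ_iff.mp h
        have h1 : ∑ k ∈ Finset.Icc p (n+1), b k * c k
            = (∑ k ∈ Finset.Icc p n, b k * c k) + b (n+1) * c (n+1) := by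
          rw [Finset.sum_Icc_succ_top (by omega)]
        have h2 : ∑ k ∈ Finset.Icc p (n+1), c k
            = (∑ k ∈ Finset.Icc p n, c k) + c (n+1) := by
          rw [Finset.sum_Icc_succ_top (by omega)]
        have h3 : ∑ j ∈ Finset.Ico p (n+1), (b j - b (j+1)) * (∑ k ∈ Finset.Icc p j, c k)
            = (∑ j ∈ Finset.Ico p n, (b j - b (j+1)) * (∑ k ∈ Finset.Icc p j, c k))
              + (b n - b (n+1)) * (∑ k ∈ Finset.Icc p n, c k) := by
          rw [Finset.sum_Ico_succ_top hpn]
        rw [h1, h2, h3, ih hpn]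
        ring
      · have hpn : p = n + 1 := le_antisymm hn h
        subst hpn
        simp

/-- Abel summation bound for nonincreasing nonneg coefficients. -/
lemma abel_bound (b c : ℕ → ℝ) (M : ℝ) (p n : ℕ) (hpn : p ≤ n)
    (hb0 : ∀ k, k ≤ n → 0 ≤ b k)
    (hbmono : ∀ k, p ≤ k → k < n → b (k+1) ≤ b k)
    (hc : ∀ j, p ≤ j → j ≤ n → |∑ k ∈ Finset.Icc p j, c k| ≤ M) :
    |∑ k ∈ Finset.Icc p n, b k * c k| ≤ b p * M := by
  rw [abel_identity b c p n hpn]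
  have hM : 0 ≤ M := le_trans (abs_nonneg _) (hc p le_rfl hpn)
  have htel : ∑ j ∈ Finset.Ico p n, (b j - b (j+1)) = b p - b n := by
    rw [Finset.sum_Ico_eq_sum_range]
    have : ∀ i ∈ Finset.range (n - p), (b (p + i) - b (p + i + 1)) = b (p+i) - b (p+(i+1)) := by
      intro i _; ring_nf
    rw [Finset.sum_congr rfl this, Finset.sum_range_sub' (fun i => b (p + i))]
    simp [Nat.add_sub_cancel' hpn]
  calc |(∑ j ∈ Finset.Ico p n, (b j - b (j+1)) * (∑ k ∈ Finset.Icc p j, c k))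
        + b n * (∑ k ∈ Finset.Icc p n, c k)|
      ≤ |∑ j ∈ Finset.Ico p n, (b j - b (j+1)) * (∑ k ∈ Finset.Icc p j, c k)|
        + |b n * (∑ k ∈ Finset.Icc p n, c k)| := abs_add_le _ _
    _ ≤ (∑ j ∈ Finset.Ico p n, (b j - b (j+1)) * M) + b n * M := by
        gcongr
        · calc |∑ j ∈ Finset.Ico p n, (b j - b (j+1)) * (∑ k ∈ Finset.Icc p j, c k)|
              ≤ ∑ j ∈ Finset.Ico p n, |(b j - b (j+1)) * (∑ k ∈ Finset.Icc p j, c k)| :=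
                Finset.abs_sum_le_sum_abs _ _
            _ ≤ ∑ j ∈ Finset.Ico p n, (b j - b (j+1)) * M := by
                apply Finset.sum_le_sum
                intro j hj
                rw [Finset.mem_Ico] at hj
                rw [abs_mul]
                have hbj : 0 ≤ b j - b (j+1) := by
                  have := hbmono j hj.1 hj.2; linarith
                rw [abs_of_nonneg hbj]
                exact mul_le_mul_of_nonneg_left (hc j hj.1 (by omega)) hbj
        · rw [abs_mul, abs_of_nonneg (hb0 n le_rfl)]
          exact mul_le_mul_of_nonneg_left (hc n hpn le_rfl) (hb0 n le_rfl)
    _ = (b p - b n) * M + b n * M := by rw [← Finset.sum_mul, htel]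
    _ = b p * M := by ring



section ModC
variable {f : ℝ → ℝ} {M : ℝ}

lemma exists_bound (hf : Continuous f) (hper : Function.Periodic f (2 * Real.pi)) :
    ∃ M : ℝ, 0 ≤ M ∧ ∀ x, |f x| ≤ M := by
  obtain ⟨C, hC⟩ := (isCompact_Icc (a := (0:ℝ)) (b := 2*π)).exists_bound_of_continuousOn
    hf.continuousOn
  refine ⟨max C 0, le_max_right _ _, fun x => ?_⟩
  obtain ⟨y, hy, hxy⟩ := hper.exists_mem_Ico₀ (by positivity) x
  rw [hxy]
  calc |f y| = ‖f y‖ := rfl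
    _ ≤ C := hC y ⟨hy.1, hy.2.le⟩
    _ ≤ max C 0 := le_max_left _ _

lemma moc_bddAbove (hM : ∀ x, |f x| ≤ M) (δ : ℝ) :
    BddAbove {y : ℝ | ∃ x t : ℝ, |t| ≤ δ ∧ y = |f (x + t) - f x|} := by
  refine ⟨2 * M, fun y hy => ?_⟩
  obtain ⟨x, t, _, rfl⟩ := hy
  calc |f (x + t) - f x| ≤ |f (x+t)| + |f x| := abs_sub _ _
    _ ≤ M + M := add_le_add (hM _) (hM _)
    _ = 2 * M := by ring

lemma moc_nonneg (hM : ∀ x, |f x| ≤ M) {δ : ℝ} (hδ : 0 ≤ δ) :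
    0 ≤ modulusOfContinuity f δ := by
  apply le_csSup (moc_bddAbove hM δ)
  exact ⟨0, 0, by simpa using hδ, by simp⟩

lemma moc_le (hM : ∀ x, |f x| ≤ M) {δ : ℝ} (x t : ℝ) (ht : |t| ≤ δ) :
    |f (x + t) - f x| ≤ modulusOfContinuity f δ :=
  le_csSup (moc_bddAbove hM δ) ⟨x, t, ht, rfl⟩

lemma moc_mono (hM : ∀ x, |f x| ≤ M) {δ₁ δ₂ : ℝ} (h1 : 0 ≤ δ₁) (h12 : δ₁ ≤ δ₂) :
    modulusOfContinuity f δ₁ ≤ modulusOfContinuity f δ₂ := by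
  apply csSup_le_csSup (moc_bddAbove hM δ₂)
  · exact ⟨0, 0, 0, by simpa using h1, by simp⟩
  · rintro y ⟨x, t, ht, rfl⟩
    exact ⟨x, t, le_trans ht h12, rfl⟩

end ModC

section Repr
variable {f : ℝ → ℝ}

lemma Dker_continuous (k : ℕ) : Continuous (Dker k) := by
  unfold Dker
  exact continuous_const.add (continuous_finset_sum _ fun j _ =>
    (Real.continuous_cos.comp (continuous_const.mul continuous_id)))

lemma integral_cos_j {j : ℕ} (hj : 1 ≤ j) :
    (∫ t in (-Real.pi)..Real.pi, Real.cos (j * t)) = 0 := by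
  have hj0 : (j : ℝ) ≠ 0 := by positivity
  rw [intervalIntegral.integral_comp_mul_left (fun u => Real.cos u) hj0]
  rw [integral_cos]
  have h1 : Real.sin ((j:ℝ) * π) = 0 := Real.sin_nat_mul_pi j
  have h2 : Real.sin ((j:ℝ) * (-π)) = 0 := by
    rw [show (j:ℝ) * (-π) = -(j * π) by ring, Real.sin_neg, h1, neg_zero]
  rw [h1, h2]
  simp

lemma integral_Dker (k : ℕ) : (∫ t in (-Real.pi)..Real.pi, Dker k t) = Real.pi := by
  unfold Dker
  rw [intervalIntegral.integral_add (Continuous.intervalIntegrable (by fun_prop) _ _) (Continuous.intervalIntegrable (by fun_prop) _ _)]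
  rw [intervalIntegral.integral_finset_sum (fun j _ => Continuous.intervalIntegrable (by fun_prop) _ _)]
  rw [Finset.sum_congr rfl (fun j hj => integral_cos_j (Finset.mem_Icc.mp hj).1)]
  simp
  ring

private noncomputable def hAux (f : ℝ → ℝ) (j : ℕ) (x : ℝ) : ℝ → ℝ :=
  fun u => f u * Real.cos (j * (u - x))

lemma hAux_periodic (hper : Function.Periodic f (2 * Real.pi)) (j : ℕ) (x : ℝ) :
    Function.Periodic (hAux f j x) (2 * Real.pi) := by
  intro u
  unfold hAux
  rw [hper u]
  congr 1
  rw [show (j:ℝ) * (u + 2*π - x) = j * (u - x) + j * (2 * π) by ring]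
  exact Real.cos_add_nat_mul_two_pi _ j

lemma integral_translate (hf : Continuous f) (hper : Function.Periodic f (2 * Real.pi)) (x : ℝ) :
    (∫ t in (-Real.pi)..Real.pi, f (x + t)) = ∫ t in (-Real.pi)..Real.pi, f t := by
  rw [intervalIntegral.integral_comp_add_left f x]
  have := hper.intervalIntegral_add_eq (x + -π) (-π)
  rw [show x + -π + 2*π = x + π by ring, show -π + 2*π = π by ring] at this
  exact this

lemma integral_translate_g (hg : Continuous f) -- f here plays role of any continuous 2π-periodic g
    (hper : Function.Periodic f (2 * Real.pi)) (x : ℝ) :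
    (∫ t in (-Real.pi)..Real.pi, f (x + t)) = ∫ t in (-Real.pi)..Real.pi, f t :=
  integral_translate hg hper x

lemma fourier_repr (hf : Continuous f) (hper : Function.Periodic f (2 * Real.pi)) (k : ℕ) (x : ℝ) :
    (1 / (2 * Real.pi)) * (∫ t in (-Real.pi)..Real.pi, f t) +
    ∑ j ∈ Finset.Icc 1 k,
      ((1 / Real.pi) * (∫ t in (-Real.pi)..Real.pi, f t * Real.cos (j * t)) * Real.cos (j * x) +
        (1 / Real.pi) * (∫ t in (-Real.pi)..Real.pi, f t * Real.sin (j * t)) * Real.sin (j * x))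
    = (1/Real.pi) * ∫ t in (-Real.pi)..Real.pi, f (x + t) * Dker k t := by
  have hπ : Real.pi ≠ 0 := Real.pi_ne_zero
  -- expand the integrand
  have hexp : ∀ t : ℝ, f (x + t) * Dker k t
      = f (x + t) * (1/2) + ∑ j ∈ Finset.Icc 1 k, f (x + t) * Real.cos (j * t) := by
    intro t
    unfold Dker
    rw [mul_add, Finset.mul_sum]
  rw [intervalIntegral.integral_congr (g := fun t =>
      f (x + t) * (1/2) + ∑ j ∈ Finset.Icc 1 k, f (x + t) * Real.cos (j * t))
      (fun t _ => hexp t)]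
  rw [intervalIntegral.integral_add (Continuous.intervalIntegrable (by fun_prop) _ _) (Continuous.intervalIntegrable (by fun_prop) _ _)]
  rw [intervalIntegral.integral_finset_sum (fun j _ => Continuous.intervalIntegrable (by fun_prop) _ _)]
  rw [intervalIntegral.integral_mul_const]
  rw [integral_translate hf hper x]
  have hterm : ∀ j ∈ Finset.Icc 1 k,
      (∫ t in (-Real.pi)..Real.pi, f (x + t) * Real.cos (j * t))
      = (∫ t in (-Real.pi)..Real.pi, f t * Real.cos (j * t)) * Real.cos (j * x)
        + (∫ t in (-Real.pi)..Real.pi, f t * Real.sin (j * t)) * Real.sin (j * x) := by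
    intro j _
    have h1 : ∀ t : ℝ, f (x + t) * Real.cos (j * t) = hAux f j x (x + t) := by
      intro t
      unfold hAux
      rw [show x + t - x = t by ring]
    rw [intervalIntegral.integral_congr (g := fun t => hAux f j x (x + t)) (fun t _ => h1 t)]
    have hcont : Continuous (hAux f j x) := by
      unfold hAux; fun_prop
    rw [integral_translate hcont (hAux_periodic hper j x) x]
    have h2 : ∀ t : ℝ, hAux f j x t
        = f t * Real.cos (j * t) * Real.cos (j * x) + f t * Real.sin (j * t) * Real.sin (j * x) := by
      intro t
      unfold hAux
      rw [show (j:ℝ) * (t - x) = j * t - j * x by ring, Real.cos_sub]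
      ring
    rw [intervalIntegral.integral_congr (g := fun t =>
        f t * Real.cos (j * t) * Real.cos (j * x) + f t * Real.sin (j * t) * Real.sin (j * x))
        (fun t _ => h2 t)]
    rw [intervalIntegral.integral_add (Continuous.intervalIntegrable (by fun_prop) _ _) (Continuous.intervalIntegrable (by fun_prop) _ _),
      intervalIntegral.integral_mul_const, intervalIntegral.integral_mul_const]
  rw [Finset.sum_congr rfl hterm]
  rw [mul_add, Finset.mul_sum]
  congr 1
  · ring
  · apply Finset.sum_congr rfl
    intro j _
    ring
end Repr

section KernelBounds

variable (a : ℕ → ℕ → ℝ)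

lemma row_antitone (hmono : ∀ n k, k < n → a n (k+1) ≤ a n k) (n : ℕ) :
    ∀ s r : ℕ, r ≤ s → s ≤ n → a n s ≤ a n r := by
  intro s
  induction s with
  | zero =>
      intro r hrs _
      have : r = 0 := Nat.le_zero.mp hrs
      subst this; exact le_rfl
  | succ s ih =>
      intro r hrs hsn
      rcases Nat.lt_or_ge r (s+1) with h | h
      · exact le_trans (hmono n s (by omega)) (ih r (by omega) (by omega))
      · have : r = s + 1 := by omega
        subst this; exact le_rfl

end KernelBounds
lemma Dker_even (k : ℕ) (t : ℝ) : Dker k (-t) = Dker k t := by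
  unfold Dker
  congr 1
  apply Finset.sum_congr rfl
  intro j _
  rw [show (j:ℝ) * -t = -(j*t) by ring, Real.cos_neg]

section Kern
variable (a : ℕ → ℕ → ℝ) (n : ℕ)

lemma kernel_small (hnn : ∀ n k, 0 ≤ a n k) (hrow : ∑ k ∈ Finset.range (n+1), a n k = 1)
    (t : ℝ) :
    |∑ k ∈ Finset.range (n+1), a n k * Dker k t| ≤ (n:ℝ) + 1 := by
  calc |∑ k ∈ Finset.range (n+1), a n k * Dker k t|
      ≤ ∑ k ∈ Finset.range (n+1), |a n k * Dker k t| := Finset.abs_sum_le_sum_abs _ _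
    _ ≤ ∑ k ∈ Finset.range (n+1), a n k * ((n:ℝ) + 1) := by
        apply Finset.sum_le_sum
        intro k hk
        rw [abs_mul, abs_of_nonneg (hnn n k)]
        apply mul_le_mul_of_nonneg_left _ (hnn n k)
        refine le_trans (Dker_abs_le k t) ?_
        have : (k:ℝ) ≤ (n:ℝ) := by exact_mod_cast Nat.lt_succ_iff.mp (Finset.mem_range.mp hk)
        linarith
    _ = (n:ℝ) + 1 := by rw [← Finset.sum_mul, hrow, one_mul]

lemma kernel_mid (hnn : ∀ n k, 0 ≤ a n k)
    (hmono : ∀ n k, k < n → a n (k+1) ≤ a n k)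
    {m : ℕ} (hm1 : 1 ≤ m) (hmn : m < n) {t : ℝ}
    (ht1 : Real.pi/((m:ℝ)+1) ≤ t) (ht2 : t ≤ Real.pi/(m:ℝ)) :
    |∑ k ∈ Finset.range (n+1), a n k * Dker k t|
      ≤ 2 * ((m:ℝ)+1) * ∑ r ∈ Finset.range (m+2), a n r := by
  have hπ := Real.pi_pos
  have hmR : (1:ℝ) ≤ (m:ℝ) := by exact_mod_cast hm1
  have htpos : 0 < t := lt_of_lt_of_le (by positivity) ht1
  have htpi : t ≤ Real.pi := le_trans ht2 (by
    rw [div_le_iff₀ (by linarith)]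
    nlinarith)
  have hs : 0 < Real.sin (t/2) := Real.sin_pos_of_pos_of_lt_pi (by linarith)
    (by linarith)
  have hsin_ge : 1/((m:ℝ)+1) ≤ Real.sin (t/2) := by
    have h := Real.mul_le_sin (x := t/2) (by linarith) (by linarith)
    have he : 2/Real.pi * (t/2) = t/Real.pi := by field_simp
    rw [he] at h
    refine le_trans ?_ h
    have h1 : Real.pi ≤ t * ((m:ℝ)+1) := by
      rw [div_le_iff₀ (by linarith : (0:ℝ) < (m:ℝ)+1)] at ht1; linarith
    rw [div_le_div_iff₀ (by linarith) hπ]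
    nlinarith
  set A := ∑ r ∈ Finset.range (m+2), a n r with hA
  have hA0 : 0 ≤ A := Finset.sum_nonneg fun r _ => hnn n r
  have hsplit : ∑ k ∈ Finset.range (n+1), a n k * Dker k t
      = (∑ k ∈ Finset.range (m+1), a n k * Dker k t)
        + ∑ k ∈ Finset.Icc (m+1) n, a n k * Dker k t := by
    rw [Finset.range_eq_Ico, ← Finset.sum_Ico_consecutive _ (Nat.zero_le (m+1)) (by omega),
      ← Finset.range_eq_Ico, Finset.Ico_add_one_right_eq_Icc]
  have hfirst : |∑ k ∈ Finset.range (m+1), a n k * Dker k t| ≤ ((m:ℝ)+1) * A := by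
    calc |∑ k ∈ Finset.range (m+1), a n k * Dker k t|
        ≤ ∑ k ∈ Finset.range (m+1), |a n k * Dker k t| := Finset.abs_sum_le_sum_abs _ _
      _ ≤ ∑ k ∈ Finset.range (m+1), a n k * ((m:ℝ) + 1) := by
          apply Finset.sum_le_sum
          intro k hk
          rw [abs_mul, abs_of_nonneg (hnn n k)]
          apply mul_le_mul_of_nonneg_left _ (hnn n k)
          refine le_trans (Dker_abs_le k t) ?_
          have : (k:ℝ) ≤ (m:ℝ) := by exact_mod_cast Nat.lt_succ_iff.mp (Finset.mem_range.mp hk)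
          linarith
      _ = (∑ k ∈ Finset.range (m+1), a n k) * ((m:ℝ)+1) := by rw [Finset.sum_mul]
      _ ≤ A * ((m:ℝ)+1) := by
          apply mul_le_mul_of_nonneg_right _ (by linarith)
          rw [hA]
          apply Finset.sum_le_sum_of_subset_of_nonneg
          · exact Finset.range_subset_range.mpr (by omega)
          · intro r _ _; exact hnn n r
      _ = ((m:ℝ)+1) * A := mul_comm _ _
  have hanm : ((m:ℝ)+2) * a n (m+1) ≤ A := by
    have hle : ∀ r ∈ Finset.range (m+2), a n (m+1) ≤ a n r := by
      intro r hr
      exact row_antitone a hmono n (m+1) r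
        (Nat.lt_succ_iff.mp (Finset.mem_range.mp hr)) (by omega)
    calc ((m:ℝ)+2) * a n (m+1) = ∑ _r ∈ Finset.range (m+2), a n (m+1) := by
          rw [Finset.sum_const, Finset.card_range, nsmul_eq_mul]
          push_cast; ring
      _ ≤ A := Finset.sum_le_sum hle
  have hsecond : |∑ k ∈ Finset.Icc (m+1) n, a n k * Dker k t| ≤ ((m:ℝ)+1)/2 * A := by
    have hDk : ∀ k : ℕ, Dker k t = Real.sin (((k:ℝ)+1/2)*t) / (2 * Real.sin (t/2)) := by
      intro k
      have h := Dker_identity k t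
      rw [eq_div_iff (by positivity : 2 * Real.sin (t/2) ≠ 0)]
      linear_combination h
    have heq : ∑ k ∈ Finset.Icc (m+1) n, a n k * Dker k t
        = (∑ k ∈ Finset.Icc (m+1) n, a n k * Real.sin (((k:ℝ)+1/2)*t))
            * (2 * Real.sin (t/2))⁻¹ := by
      rw [Finset.sum_mul]
      apply Finset.sum_congr rfl
      intro k _
      rw [hDk k]
      field_simp
    have habel : |∑ k ∈ Finset.Icc (m+1) n, a n k * Real.sin (((k:ℝ)+1/2)*t)|
        ≤ a n (m+1) * (1 / Real.sin (t/2)) := by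
      apply abel_bound (a n) (fun k => Real.sin (((k:ℝ)+1/2)*t)) (1/Real.sin (t/2)) (m+1) n
        (by omega) (fun k _ => hnn n k) (fun k _ hk2 => hmono n k hk2)
      intro j hj1 hj2
      have hIcc : ∑ k ∈ Finset.Icc (m+1) j, Real.sin (((k:ℝ)+1/2)*t)
          = Ssin j t - Ssin m t := by
        have h := Finset.sum_Ico_consecutive (f := fun k : ℕ => Real.sin (((k:ℝ)+1/2)*t))
          (Nat.zero_le (m+1)) (by omega : m+1 ≤ j+1)
        unfold Ssin
        simp only [Finset.range_eq_Ico]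
        rw [← Finset.Ico_add_one_right_eq_Icc]
        linarith [h]
      rw [hIcc]
      obtain ⟨hj0, hjM⟩ := Ssin_bounds htpos htpi j
      obtain ⟨hm0, hmM⟩ := Ssin_bounds htpos htpi m
      rw [abs_le]
      constructor <;> linarith
    rw [heq, abs_mul, abs_inv, abs_of_nonneg (by linarith : (0:ℝ) ≤ 2 * Real.sin (t/2))]
    have hms : 1 ≤ ((m:ℝ)+1) * Real.sin (t/2) := by
      rw [div_le_iff₀ (by linarith : (0:ℝ) < (m:ℝ)+1)] at hsin_ge
      linarith
    have h1s : 1/Real.sin (t/2) ≤ (m:ℝ)+1 := by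
      rw [div_le_iff₀ hs]
      linarith
    have h2s : (2*Real.sin (t/2))⁻¹ ≤ ((m:ℝ)+1)/2 := by
      have he : (2*Real.sin (t/2))⁻¹ = (1/Real.sin (t/2))/2 := by
        rw [mul_inv]
        field_simp
      rw [he]
      linarith
    calc |∑ k ∈ Finset.Icc (m+1) n, a n k * Real.sin (((k:ℝ)+1/2)*t)| * (2*Real.sin (t/2))⁻¹
        ≤ (a n (m+1) * (1/Real.sin (t/2))) * (2*Real.sin (t/2))⁻¹ := by
          apply mul_le_mul_of_nonneg_right habel (inv_nonneg.mpr (by linarith))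
      _ ≤ (a n (m+1) * ((m:ℝ)+1)) * (((m:ℝ)+1)/2) := by
          apply mul_le_mul (mul_le_mul_of_nonneg_left h1s (hnn n (m+1))) h2s
            (inv_nonneg.mpr (by linarith))
            (mul_nonneg (hnn n (m+1)) (by linarith))
      _ = a n (m+1) * ((m:ℝ)+1)^2/2 := by ring
      _ ≤ ((m:ℝ)+1)/2 * A := by nlinarith [hnn n (m+1)]
  calc |∑ k ∈ Finset.range (n+1), a n k * Dker k t|
      ≤ |∑ k ∈ Finset.range (m+1), a n k * Dker k t|
        + |∑ k ∈ Finset.Icc (m+1) n, a n k * Dker k t| := by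
        rw [hsplit]; exact abs_add_le _ _
    _ ≤ ((m:ℝ)+1) * A + ((m:ℝ)+1)/2 * A := add_le_add hfirst hsecond
    _ ≤ 2 * ((m:ℝ)+1) * A := by nlinarith

end Kern

lemma upper_split (F : ℝ → ℝ) (hF : Continuous F) (n : ℕ) (hn : 1 ≤ n) (C : ℕ → ℝ)
    (hC : ∀ m : ℕ, 1 ≤ m → m < n → ∀ t : ℝ,
      Real.pi/((m:ℝ)+1) ≤ t → t ≤ Real.pi/(m:ℝ) → |F t| ≤ C m) :
    |∫ t in (Real.pi/(n:ℝ))..Real.pi, F t|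
      ≤ ∑ m ∈ Finset.Icc 1 (n-1), C m * (Real.pi/(m:ℝ) - Real.pi/((m:ℝ)+1)) := by
  have hπ := Real.pi_pos
  set c : ℕ → ℝ := fun i => Real.pi/(((n - i : ℕ)) : ℝ) with hc
  have hadj := intervalIntegral.sum_integral_adjacent_intervals (a := c) (μ := volume)
    (f := F) (n := n-1) (fun k _ => hF.intervalIntegrable _ _)
  have hc0 : c 0 = Real.pi/(n:ℝ) := by simp [hc]
  have hclast : c (n-1) = Real.pi := by
    simp only [hc]
    rw [show n - (n-1) = 1 by omega]
    norm_num
  rw [hc0, hclast] at hadj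
  rw [← hadj]
  set D : ℕ → ℝ := fun m => C m * (Real.pi/(m:ℝ) - Real.pi/((m:ℝ)+1)) with hD
  have hpiece : ∀ i ∈ Finset.range (n-1),
      |∫ t in (c i)..(c (i+1)), F t| ≤ D (n-1-i) := by
    intro i hi
    have him : i < n - 1 := Finset.mem_range.mp hi
    set m := n - 1 - i with hm
    have hm1 : 1 ≤ m := by omega
    have hmn : m < n := by omega
    have hmR : (1:ℝ) ≤ (m:ℝ) := by exact_mod_cast hm1
    have hci : c i = Real.pi/((m:ℝ)+1) := by
      simp only [hc]
      rw [show n - i = m + 1 by omega]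
      push_cast
      ring_nf
    have hci1 : c (i+1) = Real.pi/(m:ℝ) := by
      simp only [hc]
      rw [show n - (i+1) = m by omega]
    have hle : c i ≤ c (i+1) := by
      rw [hci, hci1]
      apply div_le_div_of_nonneg_left (le_of_lt hπ) (by linarith) (by linarith)
    have hkey := intervalIntegral.norm_integral_le_of_norm_le_const (C := C m)
      (f := F) (a := c i) (b := c (i+1)) ?_
    · rw [Real.norm_eq_abs] at hkey
      refine le_trans hkey ?_
      rw [hci, hci1, hD]
      rw [abs_of_nonneg (by rw [hci, hci1] at hle; linarith)]
    · intro t ht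
      rw [Set.uIoc_of_le hle] at ht
      rw [Real.norm_eq_abs]
      exact hC m hm1 hmn t (by rw [hci] at ht; linarith [ht.1]) (by rw [hci1] at ht; exact ht.2)
  calc |∑ i ∈ Finset.range (n-1), ∫ t in (c i)..(c (i+1)), F t|
      ≤ ∑ i ∈ Finset.range (n-1), |∫ t in (c i)..(c (i+1)), F t| :=
        Finset.abs_sum_le_sum_abs _ _
    _ ≤ ∑ i ∈ Finset.range (n-1), D (n-1-i) := Finset.sum_le_sum hpiece
    _ = ∑ m ∈ Finset.Icc 1 (n-1), D m := by
        have hrefl := Finset.sum_range_reflect (fun j => D (1+j)) (n-1)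
        have hIccIco : Finset.Icc 1 (n-1) = Finset.Ico 1 n := by
          rw [← Finset.Ico_add_one_right_eq_Icc]
          congr 1
          omega
        calc ∑ i ∈ Finset.range (n-1), D (n-1-i)
            = ∑ i ∈ Finset.range (n-1), D (1 + (n-1-1-i)) := by
              apply Finset.sum_congr rfl
              intro i hi
              have := Finset.mem_range.mp hi
              congr 1
              omega
          _ = ∑ i ∈ Finset.range (n-1), D (1+i) := hrefl
          _ = ∑ m ∈ Finset.Icc 1 (n-1), D m := by
              rw [hIccIco, Finset.sum_Ico_eq_sum_range]
section ReprMain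
variable {f : ℝ → ℝ}

lemma fourierPartialSum_sub (hf : Continuous f) (hper : Function.Periodic f (2*Real.pi))
    (k : ℕ) (x : ℝ) :
    fourierPartialSum f k x - f x
      = (1/Real.pi) * ∫ t in (-Real.pi)..Real.pi, (f (x+t) - f x) * Dker k t := by
  have hπ := Real.pi_pos
  have h1 : fourierPartialSum f k x
      = (1/Real.pi) * ∫ t in (-Real.pi)..Real.pi, f (x+t) * Dker k t :=
    fourier_repr hf hper k x
  have h2 : (∫ t in (-Real.pi)..Real.pi, (f (x+t) - f x) * Dker k t)
      = (∫ t in (-Real.pi)..Real.pi, f (x+t) * Dker k t) - f x * Real.pi := by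
    have he : ∀ t:ℝ, (f (x+t) - f x) * Dker k t
        = f (x+t) * Dker k t - f x * Dker k t := fun t => by ring
    rw [intervalIntegral.integral_congr
      (g := fun t => f (x+t) * Dker k t - f x * Dker k t) (fun t _ => he t)]
    rw [intervalIntegral.integral_sub
      (Continuous.intervalIntegrable (by have := Dker_continuous k; fun_prop) _ _)
      (Continuous.intervalIntegrable (by have := Dker_continuous k; fun_prop) _ _),
      intervalIntegral.integral_const_mul, integral_Dker]
  rw [h1, h2]
  field_simp

lemma transform_sub (hf : Continuous f) (hper : Function.Periodic f (2*Real.pi))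
    (a : ℕ → ℕ → ℝ) (hrow : ∀ n : ℕ, ∑ k ∈ Finset.range (n + 1), a n k = 1) (n : ℕ) (x : ℝ) :
    matrixTransform a f n x - f x
      = (1/Real.pi) * ∫ t in (-Real.pi)..Real.pi,
          (f (x+t) - f x) * (∑ k ∈ Finset.range (n+1), a n k * Dker k t) := by
  have step1 : matrixTransform a f n x - f x
      = ∑ k ∈ Finset.range (n+1), a n k * (fourierPartialSum f k x - f x) := by
    unfold matrixTransform
    rw [Finset.sum_congr rfl (fun k _ => (mul_sub (a n k) (fourierPartialSum f k x) (f x))),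
      Finset.sum_sub_distrib, ← Finset.sum_mul, hrow n, one_mul]
  rw [step1]
  have step2 : ∀ k ∈ Finset.range (n+1), a n k * (fourierPartialSum f k x - f x)
      = (1/Real.pi) * ∫ t in (-Real.pi)..Real.pi,
          a n k * ((f (x+t) - f x) * Dker k t) := by
    intro k _
    rw [fourierPartialSum_sub hf hper k x, intervalIntegral.integral_const_mul]
    ring
  rw [Finset.sum_congr rfl step2, ← Finset.mul_sum]
  congr 1
  rw [← intervalIntegral.integral_finset_sum (fun k _ => Continuous.intervalIntegrable
    (by have h1 := Dker_continuous k; fun_prop) _ _)]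
  apply intervalIntegral.integral_congr
  intro t _
  simp only [Finset.mul_sum]
  apply Finset.sum_congr rfl
  intro k _
  ring

end ReprMain

end ChandraAux

theorem chandra_monotone_decreasing_sum
    (f : ℝ → ℝ) (hf : Continuous f) (hper : Function.Periodic f (2 * Real.pi))
    (a : ℕ → ℕ → ℝ) (htri : ∀ n k : ℕ, n < k → a n k = 0)
    (hnn : ∀ n k : ℕ, 0 ≤ a n k)
    (hrow : ∀ n : ℕ, ∑ k ∈ Finset.range (n + 1), a n k = 1)
    (hmono : ∀ n : ℕ, ∀ k : ℕ, k < n → a n (k + 1) ≤ a n k)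
    :
    ∃ C' : ℝ, 0 < C' ∧ ∀ (n : ℕ), 1 ≤ n → ∀ x : ℝ,
      |matrixTransform a f n x - f x| ≤ C' *
        (modulusOfContinuity f (Real.pi / n) +
          ∑ k ∈ Finset.Icc 1 n, ((k : ℝ))⁻¹ * modulusOfContinuity f (Real.pi / k) *
            ∑ r ∈ Finset.range (k + 2), a n r) := by
  obtain ⟨M, hM0, hM⟩ := exists_bound hf hper
  refine ⟨8, by norm_num, ?_⟩
  intro n hn x
  have hπ := Real.pi_pos
  have hnR : (1:ℝ) ≤ (n:ℝ) := by exact_mod_cast hn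
  have hnpos : (0:ℝ) < (n:ℝ) := by linarith
  set K : ℝ → ℝ := fun t => ∑ k ∈ Finset.range (n+1), a n k * Dker k t with hK
  set g : ℝ → ℝ := fun t => f (x + t) - f x with hg
  have hKcont : Continuous K := continuous_finset_sum _ fun k _ =>
    continuous_const.mul (Dker_continuous k)
  have hgcont : Continuous g := by
    rw [hg]; fun_prop
  have hFcont : Continuous (fun t => g t * K t) := hgcont.mul hKcont
  have hFcont' : Continuous (fun t => g (-t) * K (-t)) := by fun_prop
  have hrepr : matrixTransform a f n x - f x
      = (1/Real.pi) * ∫ t in (-Real.pi)..Real.pi, g t * K t :=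
    transform_sub hf hper a hrow n x
  have hint : ∀ u v : ℝ, IntervalIntegrable (fun t => g t * K t) volume u v :=
    fun u v => hFcont.intervalIntegrable u v
  have hsplit : (∫ t in (-Real.pi)..Real.pi, g t * K t)
      = (∫ t in (-Real.pi)..(-(Real.pi/(n:ℝ))), g t * K t)
        + (∫ t in (-(Real.pi/(n:ℝ)))..(Real.pi/(n:ℝ)), g t * K t)
        + (∫ t in (Real.pi/(n:ℝ))..Real.pi, g t * K t) := by
    rw [intervalIntegral.integral_add_adjacent_intervals (hint _ _) (hint _ _),
      intervalIntegral.integral_add_adjacent_intervals (hint _ _) (hint _ _)]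
  have hωn0 : 0 ≤ modulusOfContinuity f (Real.pi/(n:ℝ)) := moc_nonneg hM (by positivity)
  -- middle piece
  have hmid : |∫ t in (-(Real.pi/(n:ℝ)))..(Real.pi/(n:ℝ)), g t * K t|
      ≤ 4 * Real.pi * modulusOfContinuity f (Real.pi/(n:ℝ)) := by
    have hb : ∀ t ∈ Set.uIoc (-(Real.pi/(n:ℝ))) (Real.pi/(n:ℝ)),
        ‖g t * K t‖ ≤ modulusOfContinuity f (Real.pi/(n:ℝ)) * ((n:ℝ)+1) := by
      intro t ht
      have hpn : 0 < Real.pi/(n:ℝ) := by positivity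
      rw [Set.uIoc_of_le (by linarith : -(Real.pi/(n:ℝ)) ≤ Real.pi/(n:ℝ))] at ht
      have habs : |t| ≤ Real.pi/(n:ℝ) := abs_le.mpr ⟨le_of_lt ht.1, ht.2⟩
      rw [Real.norm_eq_abs, abs_mul]
      exact mul_le_mul (moc_le hM x t habs) (kernel_small a n hnn (hrow n) t)
        (abs_nonneg _) hωn0
    have hkey := intervalIntegral.norm_integral_le_of_norm_le_const hb
    rw [Real.norm_eq_abs] at hkey
    refine le_trans hkey ?_
    have hpn : 0 < Real.pi/(n:ℝ) := by positivity
    have habs2 : |Real.pi/(n:ℝ) - (-(Real.pi/(n:ℝ)))| = 2*(Real.pi/(n:ℝ)) := by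
      rw [abs_of_nonneg (by linarith)]
      ring
    rw [habs2]
    have hd : Real.pi/(n:ℝ) ≤ Real.pi := div_le_self (le_of_lt hπ) hnR
    have hq : ((n:ℝ)+1) * (2*(Real.pi/(n:ℝ))) ≤ 4 * Real.pi := by
      have hc : (n:ℝ)*(Real.pi/(n:ℝ)) = Real.pi := by field_simp
      nlinarith
    calc modulusOfContinuity f (Real.pi/(n:ℝ)) * ((n:ℝ)+1) * (2*(Real.pi/(n:ℝ)))
        = modulusOfContinuity f (Real.pi/(n:ℝ)) * (((n:ℝ)+1) * (2*(Real.pi/(n:ℝ)))) := by ring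
      _ ≤ modulusOfContinuity f (Real.pi/(n:ℝ)) * (4 * Real.pi) :=
          mul_le_mul_of_nonneg_left hq hωn0
      _ = 4 * Real.pi * modulusOfContinuity f (Real.pi/(n:ℝ)) := by ring
  -- pointwise bounds on the outer pieces
  set Cm : ℕ → ℝ := fun m => modulusOfContinuity f (Real.pi/(m:ℝ))
      * (2*((m:ℝ)+1) * ∑ r ∈ Finset.range (m+2), a n r) with hCm
  have hCb : ∀ m : ℕ, 1 ≤ m → m < n → ∀ t : ℝ,
      Real.pi/((m:ℝ)+1) ≤ t → t ≤ Real.pi/(m:ℝ) →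
      |g t * K t| ≤ Cm m ∧ |g (-t) * K (-t)| ≤ Cm m := by
    intro m hm1 hmn t ht1 ht2
    have hmR : (1:ℝ) ≤ (m:ℝ) := by exact_mod_cast hm1
    have htpos : 0 < t := lt_of_lt_of_le (by positivity) ht1
    have hKb := kernel_mid a n hnn hmono hm1 hmn ht1 ht2
    have hmoc0 : 0 ≤ modulusOfContinuity f (Real.pi/(m:ℝ)) := moc_nonneg hM (by positivity)
    have habs_t : |t| ≤ Real.pi/(m:ℝ) := by rw [abs_of_pos htpos]; exact ht2
    have habs_t' : |(-t)| ≤ Real.pi/(m:ℝ) := by rw [abs_neg, abs_of_pos htpos]; exact ht2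
    have hKe : K (-t) = K t := Finset.sum_congr rfl fun k _ => by rw [Dker_even]
    constructor
    · rw [abs_mul]
      exact mul_le_mul (moc_le hM x t habs_t) hKb (abs_nonneg _) hmoc0
    · rw [hKe, abs_mul]
      exact mul_le_mul (moc_le hM x (-t) habs_t') hKb (abs_nonneg _) hmoc0
  have hup := upper_split (fun t => g t * K t) hFcont n hn Cm
    (fun m h1 h2 t ht1 ht2 => (hCb m h1 h2 t ht1 ht2).1)
  have hup' := upper_split (fun t => g (-t) * K (-t)) hFcont' n hn Cm
    (fun m h1 h2 t ht1 ht2 => (hCb m h1 h2 t ht1 ht2).2)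
  have hneg : (∫ t in (-Real.pi)..(-(Real.pi/(n:ℝ))), g t * K t)
      = ∫ t in (Real.pi/(n:ℝ))..Real.pi, g (-t) * K (-t) :=
    (intervalIntegral.integral_comp_neg (a := Real.pi/(n:ℝ)) (b := Real.pi)
      (fun t => g t * K t)).symm
  -- the target sum
  have hterm : ∀ m ∈ Finset.Icc 1 (n-1),
      Cm m * (Real.pi/(m:ℝ) - Real.pi/((m:ℝ)+1))
      ≤ 2 * Real.pi * (((m:ℝ))⁻¹ * modulusOfContinuity f (Real.pi/(m:ℝ))
          * ∑ r ∈ Finset.range (m+2), a n r) := by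
    intro m hm
    have hm1 : 1 ≤ m := (Finset.mem_Icc.mp hm).1
    have hmR : (1:ℝ) ≤ (m:ℝ) := by exact_mod_cast hm1
    have hm0 : (m:ℝ) ≠ 0 := by linarith
    have hm10 : (m:ℝ)+1 ≠ 0 := by linarith
    rw [hCm]
    apply le_of_eq
    field_simp
    ring
  have hS0 : ∀ m ∈ Finset.Icc 1 n, 0 ≤ ((m:ℝ))⁻¹ * modulusOfContinuity f (Real.pi/(m:ℝ))
      * ∑ r ∈ Finset.range (m+2), a n r := by
    intro m hm
    have hm1 : 1 ≤ m := (Finset.mem_Icc.mp hm).1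
    have hmR : (1:ℝ) ≤ (m:ℝ) := by exact_mod_cast hm1
    have hmoc0 : 0 ≤ modulusOfContinuity f (Real.pi/(m:ℝ)) := moc_nonneg hM (by positivity)
    have hA0 : 0 ≤ ∑ r ∈ Finset.range (m+2), a n r := Finset.sum_nonneg fun r _ => hnn n r
    have : 0 ≤ ((m:ℝ))⁻¹ := by positivity
    positivity
  set Ssum : ℝ := ∑ m ∈ Finset.Icc 1 n, ((m:ℝ))⁻¹ * modulusOfContinuity f (Real.pi/(m:ℝ))
      * ∑ r ∈ Finset.range (m+2), a n r with hSsum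
  have hSsum0 : 0 ≤ Ssum := Finset.sum_nonneg hS0
  have hsum_le : ∑ m ∈ Finset.Icc 1 (n-1), Cm m * (Real.pi/(m:ℝ) - Real.pi/((m:ℝ)+1))
      ≤ 2 * Real.pi * Ssum := by
    calc ∑ m ∈ Finset.Icc 1 (n-1), Cm m * (Real.pi/(m:ℝ) - Real.pi/((m:ℝ)+1))
        ≤ ∑ m ∈ Finset.Icc 1 (n-1), 2 * Real.pi * (((m:ℝ))⁻¹
            * modulusOfContinuity f (Real.pi/(m:ℝ)) * ∑ r ∈ Finset.range (m+2), a n r) :=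
          Finset.sum_le_sum hterm
      _ = 2 * Real.pi * ∑ m ∈ Finset.Icc 1 (n-1), (((m:ℝ))⁻¹
            * modulusOfContinuity f (Real.pi/(m:ℝ)) * ∑ r ∈ Finset.range (m+2), a n r) := by
          rw [Finset.mul_sum]
      _ ≤ 2 * Real.pi * Ssum := by
          apply mul_le_mul_of_nonneg_left _ (by positivity)
          rw [hSsum]
          apply Finset.sum_le_sum_of_subset_of_nonneg
          · apply Finset.Icc_subset_Icc_right
            omega
          · intro m hm _
            exact hS0 m hm
  -- final assembly
  rw [hrepr]
  rw [abs_mul, abs_of_nonneg (by positivity : (0:ℝ) ≤ 1/Real.pi)]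
  have htotal : |∫ t in (-Real.pi)..Real.pi, g t * K t|
      ≤ 4 * Real.pi * modulusOfContinuity f (Real.pi/(n:ℝ)) + 2 * (2 * Real.pi * Ssum) := by
    rw [hsplit]
    calc |(∫ t in (-Real.pi)..(-(Real.pi/(n:ℝ))), g t * K t)
          + (∫ t in (-(Real.pi/(n:ℝ)))..(Real.pi/(n:ℝ)), g t * K t)
          + (∫ t in (Real.pi/(n:ℝ))..Real.pi, g t * K t)|
        ≤ |∫ t in (-Real.pi)..(-(Real.pi/(n:ℝ))), g t * K t|
          + |∫ t in (-(Real.pi/(n:ℝ)))..(Real.pi/(n:ℝ)), g t * K t|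
          + |∫ t in (Real.pi/(n:ℝ))..Real.pi, g t * K t| :=
            (abs_add_le _ _).trans (by gcongr; exact abs_add_le _ _)
      _ ≤ (2 * Real.pi * Ssum) + (4 * Real.pi * modulusOfContinuity f (Real.pi/(n:ℝ)))
            + (2 * Real.pi * Ssum) := by
          have b1 : |∫ t in (-Real.pi)..(-(Real.pi/(n:ℝ))), g t * K t| ≤ 2 * Real.pi * Ssum := by
            rw [hneg]
            exact hup'.trans hsum_le
          have b3 : |∫ t in (Real.pi/(n:ℝ))..Real.pi, g t * K t| ≤ 2 * Real.pi * Ssum :=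
            hup.trans hsum_le
          exact add_le_add (add_le_add b1 hmid) b3
      _ = 4 * Real.pi * modulusOfContinuity f (Real.pi/(n:ℝ)) + 2 * (2 * Real.pi * Ssum) := by
          ring
  calc 1/Real.pi * |∫ t in (-Real.pi)..Real.pi, g t * K t|
      ≤ 1/Real.pi * (4 * Real.pi * modulusOfContinuity f (Real.pi/(n:ℝ))
          + 2 * (2 * Real.pi * Ssum)) := by
        apply mul_le_mul_of_nonneg_left htotal (by positivity)
    _ = 4 * modulusOfContinuity f (Real.pi/(n:ℝ)) + 4 * Ssum := by
        field_simp
        ring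
    _ ≤ 8 * (modulusOfContinuity f (Real.pi/(n:ℝ)) + Ssum) := by linarith
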